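/- (Finiteness of the set of local minima of the empirical Fréchet function.) Let X₁, …, X_m : Fin J → E be configurations and F(Z) = (1/m) ∑_{j=1}^m D(Z, Xⱼ)². Then the set { W : Fin J → E | W is a local minimum of F } is finite, of cardinality at most (J!)^m; indeed it is contained in the image of the map sending each m-tuple of permutations (σ₁, …, σ_m) of Fin J to the configuration i ↦ (1/m) • ∑_{j=1}^m Xⱼ (σⱼ i). -/

import Mathlib

/-- The squared L²-matching distance between two configurations of `J` points. -/
noncomputable def sqD {E : Type*} [NormedAddCommGroup E] [InnerProductSpace ℝ E] {J : ℕ}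
    (X Y : Fin J → E) : ℝ :=
  ⨅ σ : Equiv.Perm (Fin J), ∑ i, ‖X i - Y (σ i)‖ ^ 2

/-- `W` is a local minimum of the Fréchet function of the configurations `X j`. -/
def IsLocalMinFrechet {E : Type*} [NormedAddCommGroup E] [InnerProductSpace ℝ E]
    {m J : ℕ} (X : Fin m → Fin J → E) (W : Fin J → E) : Prop :=
  ∃ r > (0 : ℝ), ∀ Z : Fin J → E, (∀ i, ‖Z i - W i‖ < r) →
    (1 / m : ℝ) * ∑ j, sqD W (X j) ≤ (1 / m : ℝ) * ∑ j, sqD Z (X j)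

lemma sqD_le_perm {E : Type*} [NormedAddCommGroup E] [InnerProductSpace ℝ E] {J : ℕ}
    (X Y : Fin J → E) (σ : Equiv.Perm (Fin J)) :
    sqD X Y ≤ ∑ i, ‖X i - Y (σ i)‖ ^ 2 :=
  ciInf_le (Finite.bddBelow_range _) σ

lemma sqD_exists_perm {E : Type*} [NormedAddCommGroup E] [InnerProductSpace ℝ E] {J : ℕ}
    (X Y : Fin J → E) : ∃ σ : Equiv.Perm (Fin J),
    sqD X Y = ∑ i, ‖X i - Y (σ i)‖ ^ 2 := by
  obtain ⟨σ, hσ⟩ := Finite.exists_min (fun σ : Equiv.Perm (Fin J) => ∑ i, ‖X i - Y (σ i)‖ ^ 2)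
  exact ⟨σ, le_antisymm (sqD_le_perm X Y σ) (le_ciInf hσ)⟩

lemma sum_norm_sub_sq_mean {E : Type*} [NormedAddCommGroup E] [InnerProductSpace ℝ E] {m : ℕ}
    (hm : (m:ℝ) ≠ 0) (a : Fin m → E) (z : E) :
    ∑ j, ‖z - a j‖ ^ 2 =
      (m:ℝ) * ‖z - (1/m:ℝ) • ∑ j, a j‖ ^ 2 + ∑ j, ‖(1/m:ℝ) • (∑ k, a k) - a j‖ ^ 2 := by
  set b := (1/m:ℝ) • ∑ j, a j with hb
  have hsum : ∑ j, (b - a j) = 0 := by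
    rw [Finset.sum_sub_distrib, Finset.sum_const, Finset.card_univ, Fintype.card_fin,
      ← Nat.cast_smul_eq_nsmul ℝ, hb, smul_smul]
    rw [mul_one_div, div_self hm, one_smul, sub_self]
  have key : ∀ j, ‖z - a j‖ ^ 2
      = ‖z - b‖ ^ 2 + 2 * (inner ℝ (z - b) (b - a j) : ℝ) + ‖b - a j‖ ^ 2 := by
    intro j
    have h : z - a j = (z - b) + (b - a j) := by abel
    rw [h, norm_add_sq_real]
  calc ∑ j, ‖z - a j‖ ^ 2
      = ∑ j, (‖z - b‖ ^ 2 + 2 * (inner ℝ (z - b) (b - a j) : ℝ) + ‖b - a j‖ ^ 2) :=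
        Finset.sum_congr rfl fun j _ => key j
    _ = (m:ℝ) * ‖z - b‖ ^ 2 + ∑ j, ‖b - a j‖ ^ 2 := by
        rw [Finset.sum_add_distrib, Finset.sum_add_distrib, Finset.sum_const,
          Finset.card_univ, Fintype.card_fin, ← Finset.mul_sum, ← inner_sum, hsum,
          inner_zero_right]
        ring

set_option maxHeartbeats 1000000 in
/-- Finiteness of the set of local minima of the empirical Fréchet function: every
local minimum is an arithmetic mean along an `m`-tuple of permutations, so there
are at most `(J!)^m` of them, independently of any weighting of the samples. -/
theorem local_minima_finite
    {E : Type*} [NormedAddCommGroup E] [InnerProductSpace ℝ E] (m J : ℕ) (hm : 1 ≤ m)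
    (X : Fin m → Fin J → E) :
    {W : Fin J → E | IsLocalMinFrechet X W} ⊆
      Set.range (fun σ : Fin m → Equiv.Perm (Fin J) =>
        fun i => (1 / m : ℝ) • ∑ j, X j (σ j i)) ∧
    {W : Fin J → E | IsLocalMinFrechet X W}.Finite ∧
    Nat.card {W : Fin J → E | IsLocalMinFrechet X W} ≤ (Nat.factorial J) ^ m := by
  have hm0 : (0:ℝ) < (m:ℝ) := by exact_mod_cast hm
  have hmne : (m:ℝ) ≠ 0 := ne_of_gt hm0
  have hsub : {W : Fin J → E | IsLocalMinFrechet X W} ⊆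
      Set.range (fun σ : Fin m → Equiv.Perm (Fin J) =>
        fun i => (1 / m : ℝ) • ∑ j, X j (σ j i)) := by
    intro W hW
    obtain ⟨r, hr, hloc⟩ := hW
    choose σ hσ using fun j => sqD_exists_perm W (X j)
    refine ⟨σ, ?_⟩
    -- notation
    set B : Fin J → E := fun i => (1/m:ℝ) • ∑ j, X j (σ j i) with hB
    set g : ℝ := ∑ i, ‖W i - B i‖ ^ 2 with hg
    set C : ℝ := ∑ i, ∑ j, ‖(1/m:ℝ) • (∑ k, X k (σ k i)) - X j (σ j i)‖ ^ 2 with hC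
    -- value of the (un-normalized) Fréchet function at W
    have hFW : ∑ j, sqD W (X j) = (m:ℝ) * g + C := by
      calc ∑ j, sqD W (X j) = ∑ j, ∑ i, ‖W i - X j (σ j i)‖ ^ 2 :=
            Finset.sum_congr rfl fun j _ => hσ j
        _ = ∑ i, ∑ j, ‖W i - X j (σ j i)‖ ^ 2 := Finset.sum_comm
        _ = ∑ i, ((m:ℝ) * ‖W i - B i‖ ^ 2
              + ∑ j, ‖(1/m:ℝ) • (∑ k, X k (σ k i)) - X j (σ j i)‖ ^ 2) :=
            Finset.sum_congr rfl fun i _ =>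
              sum_norm_sub_sq_mean hmne (fun j => X j (σ j i)) (W i)
        _ = (m:ℝ) * g + C := by
            rw [Finset.sum_add_distrib, hg, hC, Finset.mul_sum]
    -- choose the step size t
    set N : ℝ := ∑ i, ‖B i - W i‖ with hN
    have hN0 : 0 ≤ N := Finset.sum_nonneg fun i _ => norm_nonneg _
    set t : ℝ := r / (N + r) with ht
    have htpos : 0 < t := div_pos hr (by linarith)
    have htle : t ≤ 1 := by
      rw [ht, div_le_one (by linarith)]; linarith
    -- the perturbed configuration
    set Z : Fin J → E := fun i => W i + t • (B i - W i) with hZ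
    have hZclose : ∀ i, ‖Z i - W i‖ < r := by
      intro i
      have h1 : Z i - W i = t • (B i - W i) := by
        show W i + t • (B i - W i) - W i = t • (B i - W i)
        exact add_sub_cancel_left _ _
      rw [h1, norm_smul, Real.norm_eq_abs, abs_of_pos htpos]
      have h2 : ‖B i - W i‖ ≤ N :=
        Finset.single_le_sum (f := fun i => ‖B i - W i‖)
          (fun i _ => norm_nonneg _) (Finset.mem_univ i)
      have h3 : t * ‖B i - W i‖ ≤ t * N := by nlinarith
      have h4 : t * N < r := by
        rw [ht, div_mul_eq_mul_div, div_lt_iff₀ (by linarith)]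
        nlinarith
      linarith
    -- value at Z
    have hFZ : ∑ j, sqD Z (X j) ≤ (m:ℝ) * ((1-t)^2 * g) + C := by
      have step : ∀ j, sqD Z (X j) ≤ ∑ i, ‖Z i - X j (σ j i)‖ ^ 2 :=
        fun j => sqD_le_perm Z (X j) (σ j)
      calc ∑ j, sqD Z (X j) ≤ ∑ j, ∑ i, ‖Z i - X j (σ j i)‖ ^ 2 :=
            Finset.sum_le_sum fun j _ => step j
        _ = ∑ i, ∑ j, ‖Z i - X j (σ j i)‖ ^ 2 := Finset.sum_comm
        _ = ∑ i, ((m:ℝ) * ‖Z i - B i‖ ^ 2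
              + ∑ j, ‖(1/m:ℝ) • (∑ k, X k (σ k i)) - X j (σ j i)‖ ^ 2) :=
            Finset.sum_congr rfl fun i _ =>
              sum_norm_sub_sq_mean hmne (fun j => X j (σ j i)) (Z i)
        _ = (m:ℝ) * ((1-t)^2 * g) + C := by
            rw [Finset.sum_add_distrib, hC]
            congr 1
            rw [hg]
            simp only [Finset.mul_sum]
            refine Finset.sum_congr rfl fun i _ => ?_
            have h1 : Z i - B i = (1 - t) • (W i - B i) := by
              show W i + t • (B i - W i) - B i = (1 - t) • (W i - B i)
              rw [sub_smul, one_smul, smul_sub, smul_sub]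
              abel
            rw [h1, norm_smul, Real.norm_eq_abs, mul_pow, sq_abs]
    -- local minimality gives g = 0
    have hle := hloc Z hZclose
    have hle' : ∑ j, sqD W (X j) ≤ ∑ j, sqD Z (X j) := by
      have := mul_le_mul_of_nonneg_left hle (le_of_lt hm0)
      rw [← mul_assoc, ← mul_assoc, mul_one_div, div_self hmne, one_mul, one_mul] at this
      exact this
    have hgle : (m:ℝ) * g ≤ (m:ℝ) * ((1-t)^2 * g) := by
      have h := hle'.trans hFZ
      rw [hFW] at h
      linarith
    have hg1 : g ≤ (1-t)^2 * g := le_of_mul_le_mul_left hgle hm0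
    have hg0 : g ≤ 0 := by
      nlinarith [mul_pos htpos (show (0:ℝ) < 2 - t by linarith)]
    have hgnn : 0 ≤ g := Finset.sum_nonneg fun i _ => sq_nonneg _
    have hgeq : g = 0 := le_antisymm hg0 hgnn
    -- conclude W = B
    have hWB : ∀ i, W i = B i := by
      intro i
      have h1 : ‖W i - B i‖ ^ 2 = 0 := by
        rw [hg] at hgeq
        exact (Finset.sum_eq_zero_iff_of_nonneg
          (fun i _ => sq_nonneg (‖W i - B i‖))).mp hgeq i (Finset.mem_univ i)
      have h2 : ‖W i - B i‖ = 0 := by nlinarith [norm_nonneg (W i - B i)]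
      have := norm_eq_zero.mp h2
      rwa [sub_eq_zero] at this
    funext i
    exact (hWB i).symm
  refine ⟨hsub, (Set.finite_range _).subset hsub, ?_⟩
  have h1 : Nat.card {W : Fin J → E | IsLocalMinFrechet X W} ≤
      Nat.card (Set.range (fun σ : Fin m → Equiv.Perm (Fin J) =>
        fun i => (1 / m : ℝ) • ∑ j, X j (σ j i))) :=
    Nat.card_mono (Set.finite_range _) hsub
  have h2 : Nat.card (Set.range (fun σ : Fin m → Equiv.Perm (Fin J) =>
      fun i => (1 / m : ℝ) • ∑ j, X j (σ j i))) ≤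
      Nat.card (Fin m → Equiv.Perm (Fin J)) :=
    Nat.card_le_card_of_surjective _ Set.rangeFactorization_surjective
  have h3 : Nat.card (Fin m → Equiv.Perm (Fin J)) = (Nat.factorial J) ^ m := by
    rw [Nat.card_eq_fintype_card, Fintype.card_fun, Fintype.card_perm, Fintype.card_fin,
      Fintype.card_fin]
  exact h3 ▸ h1.trans h2
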